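/- For the backward recursion V_H(i,j) = r_H(i,j) and V_t(i,j) = r_t(i,j) + ∑_{i',j'} φ_t(i'|i,j) π_{t+1}(j'|i') V_{t+1}(i',j') where φ_t(·|i,j) and π_{t+1}(·|i') are probability distributions, and counts satisfying n_t(i,j) = ∑_{i'} n_t(i,j,i'), n_{t+1}(i') = ∑_{i,j} n_t(i,j,i'), n_{t+1}(i',j') = n_{t+1}(i') π_{t+1}(j'|i'), and φ_t(i'|i,j) = n_t(i,j,i')/n_t(i,j): the count-weighted value ∑_{i,j} n_t(i,j) V_t(i,j) equals ∑_{t'=t}^H ∑_{i,j} n_{t'}(i,j) r_{t'}(i,j). -/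
import Mathlib


theorem stmt16 {S A : Type*} [Fintype S] [Fintype A] (H : ℕ)
    (n1 : ℕ → S → ℝ) (n2 : ℕ → S → A → ℝ) (n3 : ℕ → S → A → S → ℝ)
    (φ : ℕ → S → A → S → ℝ) (pol : ℕ → S → A → ℝ)
    (r : ℕ → S → A → ℝ) (V : ℕ → S → A → ℝ)
    (hn2pos : ∀ t i j, 0 < n2 t i j)
    (hmarg1 : ∀ t i j, n2 t i j = ∑ i', n3 t i j i')
    (hmarg2 : ∀ t i', n1 (t + 1) i' = ∑ i, ∑ j, n3 t i j i')
    (hpol : ∀ t i' j', n2 (t + 1) i' j' = n1 (t + 1) i' * pol (t + 1) i' j')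
    (hφ : ∀ t i j i', φ t i j i' = n3 t i j i' / n2 t i j)
    (hVH : ∀ i j, V H i j = r H i j)
    (hV : ∀ t < H, ∀ i j,
      V t i j = r t i j
        + ∑ i', ∑ j', φ t i j i' * pol (t + 1) i' j' * V (t + 1) i' j')
    (t : ℕ) (ht : t ≤ H) :
    ∑ i, ∑ j, n2 t i j * V t i j
      = ∑ t' ∈ Finset.Icc t H, ∑ i, ∑ j, n2 t' i j * r t' i j := by
  have swap : ∀ (f : S → A → S → A → ℝ),
      ∑ i, ∑ j, ∑ i', ∑ j', f i j i' j'
        = ∑ i', ∑ j', ∑ i, ∑ j, f i j i' j' := by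
    intro f
    calc ∑ i, ∑ j, ∑ i', ∑ j', f i j i' j'
        = ∑ i, ∑ i', ∑ j, ∑ j', f i j i' j' :=
          Finset.sum_congr rfl fun i _ => Finset.sum_comm
      _ = ∑ i', ∑ i, ∑ j, ∑ j', f i j i' j' := Finset.sum_comm
      _ = ∑ i', ∑ i, ∑ j', ∑ j, f i j i' j' :=
          Finset.sum_congr rfl fun i' _ =>
            Finset.sum_congr rfl fun i _ => Finset.sum_comm
      _ = ∑ i', ∑ j', ∑ i, ∑ j, f i j i' j' :=
          Finset.sum_congr rfl fun i' _ => Finset.sum_comm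
  induction' hd : H - t with d ih generalizing t
  · have hEq : t = H := by omega
    subst hEq
    simp [hVH, Finset.Icc_self]
  · have htH : t < H := by omega
    have key : ∑ i, ∑ j, n2 t i j * V t i j
        = (∑ i, ∑ j, n2 t i j * r t i j)
          + ∑ i', ∑ j', n2 (t + 1) i' j' * V (t + 1) i' j' := by
      have step : ∀ i j, n2 t i j * V t i j
          = n2 t i j * r t i j
            + ∑ i', ∑ j', n3 t i j i' * pol (t + 1) i' j' * V (t + 1) i' j' := by
        intro i j
        have hne := (hn2pos t i j).ne'
        rw [hV t htH i j, mul_add, Finset.mul_sum]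
        congr 1
        refine Finset.sum_congr rfl fun i' _ => ?_
        rw [Finset.mul_sum]
        refine Finset.sum_congr rfl fun j' _ => ?_
        rw [hφ]
        field_simp
      have step2 : ∀ i' j', n2 (t + 1) i' j' * V (t + 1) i' j'
          = ∑ i, ∑ j, n3 t i j i' * pol (t + 1) i' j' * V (t + 1) i' j' := by
        intro i' j'
        rw [hpol, hmarg2]
        simp only [Finset.sum_mul]
      simp only [step, Finset.sum_add_distrib, step2]
      congr 1
      exact swap _
    rw [key, ih (t + 1) (by omega) (by omega),
      show Finset.Icc t H = insert t (Finset.Icc (t + 1) H) from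
        Finset.ext fun x => by simp [Finset.mem_Icc]; omega,
      Finset.sum_insert (by simp)]
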